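/- Let m ≥ 3 and n ≥ 2 be integers and let S_II(m,n) be the Type-II hyperedge-deleted Seidel matrix. For any two distinct indices i, j of the first block different from its first two indices, the vector e_i - e_j satisfies S_II(m,n)·(e_i - e_j) = (2n-1)·(e_i - e_j); and for any two distinct indices i, j of the second block different from its first index, S_II(m,n)·(e_i - e_j) = (2m-1)·(e_i - e_j). In particular 2n-1 is an eigenvalue of S_II(m,n) of multiplicity at least m-3 and 2m-1 is an eigenvalue of multiplicity at least n-2. -/

import Mathlib

set_option maxHeartbeats 1000000


open Polynomial Matrix

/-- The Seidel matrix of the complete 3-uniform bipartite hypergraph `C³_{m,n}`. -/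
noncomputable def seidelS (m n : ℕ) : Matrix (Fin m ⊕ Fin n) (Fin m ⊕ Fin n) ℝ :=
  fun i j =>
    if i = j then 0
    else
      match i, j with
      | Sum.inl _, Sum.inl _ => 1 - 2 * (n : ℝ)
      | Sum.inr _, Sum.inr _ => 1 - 2 * (m : ℝ)
      | _, _ => 1 - 2 * ((m : ℝ) + (n : ℝ) - 2)

/-- Type-I hyperedge-deleted Seidel matrix. -/
noncomputable def seidelI (m n : ℕ) : Matrix (Fin m ⊕ Fin n) (Fin m ⊕ Fin n) ℝ :=
  fun i j =>
    match i, j with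
    | Sum.inl a, Sum.inr b =>
        if a.val = 0 ∧ b.val ≤ 1 then 1 - 2 * ((m : ℝ) + (n : ℝ) - 3)
        else seidelS m n (Sum.inl a) (Sum.inr b)
    | Sum.inr b, Sum.inl a =>
        if a.val = 0 ∧ b.val ≤ 1 then 1 - 2 * ((m : ℝ) + (n : ℝ) - 3)
        else seidelS m n (Sum.inr b) (Sum.inl a)
    | Sum.inr a, Sum.inr b =>
        if (a.val = 0 ∧ b.val = 1) ∨ (a.val = 1 ∧ b.val = 0) then 1 - 2 * ((m : ℝ) - 1)
        else seidelS m n (Sum.inr a) (Sum.inr b)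
    | Sum.inl a, Sum.inl b => seidelS m n (Sum.inl a) (Sum.inl b)

/-- Type-II hyperedge-deleted Seidel matrix. -/
noncomputable def seidelII (m n : ℕ) : Matrix (Fin m ⊕ Fin n) (Fin m ⊕ Fin n) ℝ :=
  fun i j =>
    match i, j with
    | Sum.inl a, Sum.inl b =>
        if (a.val = 0 ∧ b.val = 1) ∨ (a.val = 1 ∧ b.val = 0) then 1 - 2 * ((n : ℝ) - 1)
        else seidelS m n (Sum.inl a) (Sum.inl b)
    | Sum.inl a, Sum.inr b =>
        if a.val ≤ 1 ∧ b.val = 0 then 1 - 2 * ((m : ℝ) + (n : ℝ) - 3)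
        else seidelS m n (Sum.inl a) (Sum.inr b)
    | Sum.inr b, Sum.inl a =>
        if a.val ≤ 1 ∧ b.val = 0 then 1 - 2 * ((m : ℝ) + (n : ℝ) - 3)
        else seidelS m n (Sum.inr b) (Sum.inl a)
    | Sum.inr a, Sum.inr b => seidelS m n (Sum.inr a) (Sum.inr b)

/-- Seidel energy: sum of absolute values of the eigenvalues (roots of the
characteristic polynomial, with multiplicity). -/
noncomputable def seidelEnergy {k : Type*} [Fintype k] [DecidableEq k]
    (M : Matrix k k ℝ) : ℝ :=
  (M.charpoly.roots.map (fun x => |x|)).sum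


section Aux

open Finset

lemma charpoly_diag_const {ι : Type*} [Fintype ι] [DecidableEq ι] (μ : ℝ) :
    (Matrix.diagonal (fun _ : ι => μ)).charpoly = (X - C μ) ^ Fintype.card ι := by
  have h : Matrix.charmatrix (Matrix.diagonal fun _ : ι => μ)
      = Matrix.diagonal (fun _ : ι => (X - C μ : ℝ[X])) := by
    ext i j
    by_cases h : i = j
    · subst h; simp [Matrix.charmatrix_apply]
    · simp [Matrix.charmatrix_apply, Matrix.diagonal_apply_ne _ h, h]
  rw [Matrix.charpoly, h, Matrix.det_diagonal, Finset.prod_const, Finset.card_univ]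

lemma charpoly_diag_const' {ι : Type*} (i1 : Fintype ι) (i2 : DecidableEq ι) (μ : ℝ) :
    @Matrix.charpoly ℝ _ ι i2 i1 (@Matrix.diagonal ι ℝ i2 _ (fun _ => μ))
      = (X - C μ) ^ (@Fintype.card ι i1) := by
  letI := i1; letI := i2
  exact charpoly_diag_const μ

/-- Geometric multiplicity bounds algebraic multiplicity. -/
lemma le_rootMultiplicity_of_linearIndependent {k : Type*} [Fintype k] [DecidableEq k]
    (M : Matrix k k ℝ) (μ : ℝ) {r : ℕ} (v : Fin r → (k → ℝ))
    (hv : LinearIndependent ℝ v) (hev : ∀ t, M.mulVec (v t) = μ • v t) :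
    r ≤ M.charpoly.rootMultiplicity μ := by
  classical
  rcases Nat.eq_zero_or_pos r with hr | hr
  · omega
  rw [Polynomial.le_rootMultiplicity_iff (Matrix.charpoly_monic M).ne_zero]
  have hs : LinearIndepOn ℝ id (Set.range v) := (linearIndepOn_id_range_iff hv.injective).mpr hv
  let b : Module.Basis _ ℝ (k → ℝ) := Module.Basis.extend hs
  haveI : Fintype (hs.extend (Set.subset_univ _)) := FiniteDimensional.fintypeBasisIndex b
  let f : (k → ℝ) →ₗ[ℝ] (k → ℝ) := Matrix.toLin' M
  let A := LinearMap.toMatrix b b f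
  have hMA : M.charpoly = A.charpoly := by
    have h1 : (LinearMap.toMatrix (Pi.basisFun ℝ k) (Pi.basisFun ℝ k) f) = M := by
      rw [LinearMap.toMatrix_eq_toMatrix', LinearMap.toMatrix'_toLin']
    rw [← h1, LinearMap.charpoly_toMatrix, LinearMap.charpoly_toMatrix]
  let g : hs.extend (Set.subset_univ _) → Fin 2 :=
    fun x => if (x : k → ℝ) ∈ Set.range v then 0 else 1
  have key : ∀ (x y : hs.extend (Set.subset_univ _)), (y : k → ℝ) ∈ Set.range v →
      A x y = if x = y then μ else 0 := by
    intro x y hy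
    obtain ⟨i, hi⟩ := hy
    have hby : b y = (y : k → ℝ) := Module.Basis.extend_apply_self hs y
    have hf : f (b y) = μ • b y := by
      rw [hby, ← hi]
      show Matrix.toLin' M (v i) = μ • v i
      rw [Matrix.toLin'_apply, hev]
    have hA : A x y = b.repr (f (b y)) x := LinearMap.toMatrix_apply b b f x y
    rw [hA, hf, _root_.map_smul, Module.Basis.repr_self]
    by_cases h : x = y
    · subst h; simp
    · simp [Finsupp.single_apply, Ne.symm h, h]
  have hbt : A.BlockTriangular g := by
    intro x y hxy
    by_cases hx : (x : k → ℝ) ∈ Set.range v <;> by_cases hy : (y : k → ℝ) ∈ Set.range v <;>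
      simp only [g, if_pos, if_neg, hx, hy, if_true, if_false] at hxy <;>
      first
        | exact absurd hxy (by decide)
        | skip
    rw [key x y hy, if_neg]
    rintro rfl; exact hx hy
  rw [hMA, hbt.charpoly]
  have hmem0 : ∀ x : hs.extend (Set.subset_univ _), (x : k → ℝ) ∈ Set.range v → g x = 0 := by
    intro x hx; simp only [g]; rw [if_pos hx]
  have hx0 : (v ⟨0, hr⟩ : k → ℝ) ∈ hs.extend (Set.subset_univ _) :=
    hs.subset_extend (Set.subset_univ _) ⟨⟨0, hr⟩, rfl⟩
  refine dvd_trans ?_ (Finset.dvd_prod_of_mem (a := (0 : Fin 2)) _ ?_)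
  swap
  · simp only [Finset.mem_image]
    exact ⟨⟨v ⟨0, hr⟩, hx0⟩, Finset.mem_univ _, hmem0 _ ⟨⟨0, hr⟩, rfl⟩⟩
  have hblock : A.toSquareBlock g 0 = Matrix.diagonal (fun _ => μ) := by
    ext i j
    have hj : ((j : _) : k → ℝ) ∈ Set.range v := by
      by_contra h
      have h2 := j.2
      simp [g, h] at h2
      exact h h2
    show A (↑i) (↑j) = _
    rw [key _ _ hj]
    by_cases h : i = j
    · subst h; simp
    · rw [if_neg (fun hh => h (Subtype.ext hh)), Matrix.diagonal_apply_ne _ h]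
  rw [hblock, charpoly_diag_const' _ _ μ]
  apply pow_dvd_pow
  have hinj : Function.Injective
      (fun t : Fin r => (⟨⟨v t, hs.subset_extend (Set.subset_univ _) ⟨t, rfl⟩⟩,
        hmem0 _ ⟨t, rfl⟩⟩ : {x : hs.extend (Set.subset_univ _) // g x = 0})) := by
    intro t₁ t₂ h
    exact hv.injective (by simpa [Subtype.ext_iff] using h)
  have hcard : r ≤ Fintype.card {x : hs.extend (Set.subset_univ _) // g x = 0} :=
    le_trans (le_of_eq (Fintype.card_fin r).symm) (Fintype.card_le_of_injective _ hinj)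
  convert hcard using 2 <;> exact Subsingleton.elim _ _

end Aux

theorem stmt7 (m n : ℕ) (hm : 3 ≤ m) (hn : 2 ≤ n) :
    (∀ i j : Fin m, i ≠ j → 2 ≤ i.val → 2 ≤ j.val →
      (seidelII m n).mulVec
          (Pi.single (Sum.inl i) (1:ℝ) - Pi.single (Sum.inl j) (1:ℝ)) =
        (2*(n:ℝ) - 1) • (Pi.single (Sum.inl i) (1:ℝ) - Pi.single (Sum.inl j) (1:ℝ))) ∧
    (∀ i j : Fin n, i ≠ j → i.val ≠ 0 → j.val ≠ 0 →
      (seidelII m n).mulVec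
          (Pi.single (Sum.inr i) (1:ℝ) - Pi.single (Sum.inr j) (1:ℝ)) =
        (2*(m:ℝ) - 1) • (Pi.single (Sum.inr i) (1:ℝ) - Pi.single (Sum.inr j) (1:ℝ))) ∧
    m - 3 ≤ (seidelII m n).charpoly.rootMultiplicity (2*(n:ℝ) - 1) ∧
    n - 2 ≤ (seidelII m n).charpoly.rootMultiplicity (2*(m:ℝ) - 1) := by
  classical
  have H1 : ∀ i j : Fin m, i ≠ j → 2 ≤ i.val → 2 ≤ j.val →
      (seidelII m n).mulVec
          (Pi.single (Sum.inl i) (1:ℝ) - Pi.single (Sum.inl j) (1:ℝ)) =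
        (2*(n:ℝ) - 1) • (Pi.single (Sum.inl i) (1:ℝ) - Pi.single (Sum.inl j) (1:ℝ)) := by
    intro i j hij hi2 hj2
    funext x
    simp only [Matrix.mulVec_sub, Matrix.mulVec_single_one, Matrix.col_apply, Pi.sub_apply, Pi.smul_apply,
      smul_eq_mul, mul_one]
    rcases x with a | b
    · have h1 : ¬((a.val = 0 ∧ i.val = 1) ∨ (a.val = 1 ∧ i.val = 0)) := by omega
      have h2 : ¬((a.val = 0 ∧ j.val = 1) ∨ (a.val = 1 ∧ j.val = 0)) := by omega
      simp only [seidelII, seidelS, if_neg h1, if_neg h2]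
      by_cases hai : a = i
      · subst hai
        have haj : (Sum.inl a : Fin m ⊕ Fin n) ≠ Sum.inl j := by
          simp only [ne_eq, Sum.inl.injEq]; exact hij
        rw [if_pos rfl, if_neg haj]
        simp [Pi.single_apply, Ne.symm hij]
      · by_cases haj : a = j
        · subst haj
          have hne : (Sum.inl a : Fin m ⊕ Fin n) ≠ Sum.inl i := by
            simp only [ne_eq, Sum.inl.injEq]; exact fun h => hai h
          rw [if_neg hne, if_pos rfl]
          simp [Pi.single_apply, hai, Ne.symm hij]
        · have hne1 : (Sum.inl a : Fin m ⊕ Fin n) ≠ Sum.inl i := by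
            simp only [ne_eq, Sum.inl.injEq]; exact hai
          have hne2 : (Sum.inl a : Fin m ⊕ Fin n) ≠ Sum.inl j := by
            simp only [ne_eq, Sum.inl.injEq]; exact haj
          rw [if_neg hne1, if_neg hne2]
          simp [Pi.single_apply, hai, haj]
    · have h1 : ¬(i.val ≤ 1 ∧ b.val = 0) := by omega
      have h2 : ¬(j.val ≤ 1 ∧ b.val = 0) := by omega
      simp only [seidelII, seidelS, if_neg h1, if_neg h2]
      simp [Pi.single_apply]
  have H2 : ∀ i j : Fin n, i ≠ j → i.val ≠ 0 → j.val ≠ 0 →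
      (seidelII m n).mulVec
          (Pi.single (Sum.inr i) (1:ℝ) - Pi.single (Sum.inr j) (1:ℝ)) =
        (2*(m:ℝ) - 1) • (Pi.single (Sum.inr i) (1:ℝ) - Pi.single (Sum.inr j) (1:ℝ)) := by
    intro i j hij hi0 hj0
    funext x
    simp only [Matrix.mulVec_sub, Matrix.mulVec_single_one, Matrix.col_apply, Pi.sub_apply, Pi.smul_apply,
      smul_eq_mul, mul_one]
    rcases x with a | b
    · have h1 : ¬(a.val ≤ 1 ∧ i.val = 0) := by omega
      have h2 : ¬(a.val ≤ 1 ∧ j.val = 0) := by omega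
      simp only [seidelII, seidelS, if_neg h1, if_neg h2]
      simp [Pi.single_apply]
    · simp only [seidelII, seidelS]
      by_cases hbi : b = i
      · subst hbi
        have hbj : (Sum.inr b : Fin m ⊕ Fin n) ≠ Sum.inr j := by
          simp only [ne_eq, Sum.inr.injEq]; exact hij
        rw [if_pos rfl, if_neg hbj]
        simp [Pi.single_apply, Ne.symm hij]
      · by_cases hbj : b = j
        · subst hbj
          have hne : (Sum.inr b : Fin m ⊕ Fin n) ≠ Sum.inr i := by
            simp only [ne_eq, Sum.inr.injEq]; exact hbi
          rw [if_neg hne, if_pos rfl]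
          simp [Pi.single_apply, hbi, Ne.symm hij]
        · have hne1 : (Sum.inr b : Fin m ⊕ Fin n) ≠ Sum.inr i := by
            simp only [ne_eq, Sum.inr.injEq]; exact hbi
          have hne2 : (Sum.inr b : Fin m ⊕ Fin n) ≠ Sum.inr j := by
            simp only [ne_eq, Sum.inr.injEq]; exact hbj
          rw [if_neg hne1, if_neg hne2]
          simp [Pi.single_apply, hbi, hbj]
  refine ⟨H1, H2, ?_, ?_⟩
  · -- eigenvalue 2n-1 with multiplicity ≥ m-3
    set c : Fin (m-3) → Fin m := fun t => ⟨t.val + 2, by omega⟩ with hc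
    set lst : Fin m := ⟨m - 1, by omega⟩ with hlst
    set v : Fin (m-3) → (Fin m ⊕ Fin n → ℝ) :=
      fun t => Pi.single (Sum.inl (c t)) (1:ℝ) - Pi.single (Sum.inl lst) (1:ℝ) with hv
    have hclst : ∀ t, c t ≠ lst := by
      intro t h
      have := congrArg Fin.val h
      simp only [hc, hlst] at this
      omega
    have hvt : ∀ s t : Fin (m-3), v s (Sum.inl (c t)) = if t = s then (1:ℝ) else 0 := by
      intro s t
      simp only [hv, Pi.sub_apply, Pi.single_apply]
      have h2 : (Sum.inl (c t) : Fin m ⊕ Fin n) ≠ Sum.inl lst := by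
        simp only [ne_eq, Sum.inl.injEq]; exact hclst t
      rw [if_neg h2, sub_zero]
      by_cases h : t = s
      · subst h; rw [if_pos rfl, if_pos rfl]
      · rw [if_neg, if_neg h]
        simp only [ne_eq, Sum.inl.injEq]
        intro hcc
        exact h (by
          have := congrArg Fin.val hcc
          simp only [hc] at this
          exact Fin.ext (by omega))
    have hli : LinearIndependent ℝ v := by
      rw [Fintype.linearIndependent_iff]
      intro gc hg t
      have h := congrFun hg (Sum.inl (c t))
      rw [Finset.sum_apply] at h
      simp only [Pi.smul_apply, smul_eq_mul, hvt, mul_ite, mul_one, mul_zero] at h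
      rw [Finset.sum_ite_eq Finset.univ t gc] at h
      simpa using h
    have hev : ∀ t, (seidelII m n).mulVec (v t) = (2*(n:ℝ)-1) • v t := by
      intro t
      exact H1 (c t) lst (hclst t) (by simp [hc]) (by simp [hlst]; omega)
    exact le_rootMultiplicity_of_linearIndependent _ _ v hli hev
  · -- eigenvalue 2m-1 with multiplicity ≥ n-2
    set c : Fin (n-2) → Fin n := fun t => ⟨t.val + 1, by omega⟩ with hc
    set lst : Fin n := ⟨n - 1, by omega⟩ with hlst
    set v : Fin (n-2) → (Fin m ⊕ Fin n → ℝ) :=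
      fun t => Pi.single (Sum.inr (c t)) (1:ℝ) - Pi.single (Sum.inr lst) (1:ℝ) with hv
    have hclst : ∀ t, c t ≠ lst := by
      intro t h
      have := congrArg Fin.val h
      simp only [hc, hlst] at this
      omega
    have hvt : ∀ s t : Fin (n-2), v s (Sum.inr (c t)) = if t = s then (1:ℝ) else 0 := by
      intro s t
      simp only [hv, Pi.sub_apply, Pi.single_apply]
      have h2 : (Sum.inr (c t) : Fin m ⊕ Fin n) ≠ Sum.inr lst := by
        simp only [ne_eq, Sum.inr.injEq]; exact hclst t
      rw [if_neg h2, sub_zero]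
      by_cases h : t = s
      · subst h; rw [if_pos rfl, if_pos rfl]
      · rw [if_neg, if_neg h]
        simp only [ne_eq, Sum.inr.injEq]
        intro hcc
        exact h (by
          have := congrArg Fin.val hcc
          simp only [hc] at this
          exact Fin.ext (by omega))
    have hli : LinearIndependent ℝ v := by
      rw [Fintype.linearIndependent_iff]
      intro gc hg t
      have h := congrFun hg (Sum.inr (c t))
      rw [Finset.sum_apply] at h
      simp only [Pi.smul_apply, smul_eq_mul, hvt, mul_ite, mul_one, mul_zero] at h
      rw [Finset.sum_ite_eq Finset.univ t gc] at h
      simpa using h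
    have hev : ∀ t, (seidelII m n).mulVec (v t) = (2*(m:ℝ)-1) • v t := by
      intro t
      exact H2 (c t) lst (hclst t) (by simp [hc]) (by simp [hlst]; omega)
    exact le_rootMultiplicity_of_linearIndependent _ _ v hli hev
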